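/- Strong duality for TV-distance robust expectation: for any probability measure μ⁰ on a state space S, any uncertainty level ρ ≥ 0, and any bounded value function V : S → [0,H], one has inf_{μ ∈ U^ρ(μ⁰)} ∫_S μ(s')V(s') ds' = max_{α ∈ [min_s V(s), max_s V(s)]} { E_{s'∼μ⁰}[ [V]_α(s') ] − ρ(α − min_{s'} [V]_α(s')) }, where U^ρ(μ⁰) = { μ ∈ Δ(S) : (1/2)‖μ − μ⁰‖₁ ≤ ρ } and [V]_α(s) = min(V(s), α). -/
import Mathlib


/-- Strong duality for the TV-distance robust expectation over a finite state space:
`inf_{μ ∈ U^ρ(μ⁰)} ∑ μ(s) V(s)` equals the supremum over clipping levels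
`α ∈ [min V, max V]` of `E_{μ⁰}[[V]_α] − ρ (α − min [V]_α)`. -/
theorem stmt5 {S : Type*} [Fintype S] [Nonempty S]
    (μ0 : S → ℝ) (hμ0 : ∀ s, 0 ≤ μ0 s) (hsum : ∑ s, μ0 s = 1)
    (ρ : ℝ) (hρ : 0 ≤ ρ) (H : ℝ) (V : S → ℝ)
    (hV : ∀ s, V s ∈ Set.Icc (0 : ℝ) H) :
    sInf ((fun μ : S → ℝ => ∑ s, μ s * V s) ''
        {μ | (∀ s, 0 ≤ μ s) ∧ (∑ s, μ s = 1) ∧ (1 / 2) * ∑ s, |μ s - μ0 s| ≤ ρ})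
    = sSup ((fun α : ℝ =>
        (∑ s, μ0 s * min (V s) α) - ρ * (α - ⨅ s', min (V s') α)) ''
        Set.Icc (⨅ s, V s) (⨆ s, V s)) := by
  classical
  obtain ⟨s0, hs0⟩ := Finite.exists_min V
  obtain ⟨sM, hsM⟩ := Finite.exists_max V
  set m := ⨅ s, V s with hm_def
  set M := ⨆ s, V s with hM_def
  have hm : m = V s0 := le_antisymm (ciInf_le (Finite.bddBelow_range V) s0) (le_ciInf hs0)
  have hM : M = V sM := le_antisymm (ciSup_le hsM) (le_ciSup (Finite.bddAbove_range V) sM)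
  have hV0 : V s0 = m := hm.symm
  have hmV : ∀ s, m ≤ V s := fun s => hm ▸ hs0 s
  have hVM : ∀ s, V s ≤ M := fun s => hM ▸ hsM s
  have hmM : m ≤ M := le_trans (hmV sM) (hVM sM)
  -- clipped inf
  have hclip : ∀ α : ℝ, m ≤ α → (⨅ s', min (V s') α) = m := by
    intro α hα
    refine le_antisymm ?_ (le_ciInf fun s => le_min (hmV s) hα)
    calc (⨅ s', min (V s') α) ≤ min (V s0) α :=
          ciInf_le (Finite.bddBelow_range _) s0
      _ = m := by rw [hV0]; exact min_eq_left hα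
  have hVnn : ∀ s, 0 ≤ V s := fun s => (hV s).1
  -- weak duality
  have weak : ∀ α ∈ Set.Icc m M, ∀ μ : S → ℝ, (∀ s, 0 ≤ μ s) → (∑ s, μ s = 1) →
      (1 / 2) * ∑ s, |μ s - μ0 s| ≤ ρ →
      (∑ s, μ0 s * min (V s) α) - ρ * (α - m) ≤ ∑ s, μ s * V s := by
    intro α hα μ hμnn hμ1 hμtv
    have hαm : m ≤ α := hα.1
    have hmax : ∀ x : ℝ, max x 0 = (x + |x|) / 2 := by
      intro x; rcases le_total x 0 with h | h
      · rw [max_eq_right h, abs_of_nonpos h]; ring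
      · rw [max_eq_left h, abs_of_nonneg h]; ring
    have hpos : ∑ s, max (μ0 s - μ s) 0 ≤ ρ := by
      have e : ∑ s, max (μ0 s - μ s) 0
          = ((∑ s, (μ0 s - μ s)) + ∑ s, |μ0 s - μ s|) / 2 := by
        rw [Finset.sum_congr rfl (fun s _ => hmax (μ0 s - μ s)), ← Finset.sum_div,
          Finset.sum_add_distrib]
      have e2 : ∑ s, (μ0 s - μ s) = 0 := by
        rw [Finset.sum_sub_distrib, hsum, hμ1]; ring
      have e3 : ∑ s, |μ0 s - μ s| = ∑ s, |μ s - μ0 s| :=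
        Finset.sum_congr rfl (fun s _ => abs_sub_comm _ _)
      rw [e, e2, e3]; linarith
    have step1 : ∑ s, μ s * min (V s) α ≤ ∑ s, μ s * V s :=
      Finset.sum_le_sum fun s _ =>
        mul_le_mul_of_nonneg_left (min_le_left _ _) (hμnn s)
    have key : -(ρ * (α - m)) ≤ ∑ s, (μ s - μ0 s) * (min (V s) α - m) := by
      have hterm : ∀ s, -(max (μ0 s - μ s) 0 * (α - m))
          ≤ (μ s - μ0 s) * (min (V s) α - m) := by
        intro s
        have h1 : 0 ≤ min (V s) α - m := by
          have := le_min (hmV s) hαm; linarith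
        have h2 : min (V s) α - m ≤ α - m := by
          have := min_le_right (V s) α; linarith
        have h3 : μ0 s - μ s ≤ max (μ0 s - μ s) 0 := le_max_left _ _
        have h4 : (0:ℝ) ≤ max (μ0 s - μ s) 0 := le_max_right _ _
        nlinarith
      calc -(ρ * (α - m)) ≤ -((∑ s, max (μ0 s - μ s) 0) * (α - m)) := by
            have : 0 ≤ α - m := by linarith
            nlinarith
        _ = ∑ s, -(max (μ0 s - μ s) 0 * (α - m)) := by
            rw [Finset.sum_mul, ← Finset.sum_neg_distrib]
        _ ≤ _ := Finset.sum_le_sum fun s _ => hterm s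
    have expand : ∑ s, (μ s - μ0 s) * (min (V s) α - m)
        = (∑ s, μ s * min (V s) α) - ∑ s, μ0 s * min (V s) α := by
      have e : ∀ s, (μ s - μ0 s) * (min (V s) α - m)
          = (μ s * min (V s) α - μ0 s * min (V s) α) - m * (μ s - μ0 s) := by
        intro s; ring
      rw [Finset.sum_congr rfl (fun s _ => e s), Finset.sum_sub_distrib,
        Finset.sum_sub_distrib, ← Finset.mul_sum, Finset.sum_sub_distrib, hsum, hμ1]
      ring
    rw [expand] at key
    linarith
  -- set properties
  have LHSne : ((fun μ : S → ℝ => ∑ s, μ s * V s) ''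
      {μ | (∀ s, 0 ≤ μ s) ∧ (∑ s, μ s = 1) ∧ (1 / 2) * ∑ s, |μ s - μ0 s| ≤ ρ}).Nonempty := by
    refine ⟨∑ s, μ0 s * V s, μ0, ⟨hμ0, hsum, ?_⟩, rfl⟩
    simp [hρ]
  have LHSbdd : BddBelow ((fun μ : S → ℝ => ∑ s, μ s * V s) ''
      {μ | (∀ s, 0 ≤ μ s) ∧ (∑ s, μ s = 1) ∧ (1 / 2) * ∑ s, |μ s - μ0 s| ≤ ρ}) := by
    refine ⟨0, ?_⟩
    rintro x ⟨μ, ⟨h1, _, _⟩, rfl⟩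
    exact Finset.sum_nonneg fun s _ => mul_nonneg (h1 s) (hVnn s)
  have RHSne : ((fun α : ℝ =>
      (∑ s, μ0 s * min (V s) α) - ρ * (α - ⨅ s', min (V s') α)) ''
      Set.Icc m M).Nonempty :=
    ⟨_, m, ⟨le_refl m, hmM⟩, rfl⟩
  have RHSbdd : BddAbove ((fun α : ℝ =>
      (∑ s, μ0 s * min (V s) α) - ρ * (α - ⨅ s', min (V s') α)) ''
      Set.Icc m M) := by
    refine ⟨∑ s, μ0 s * V s, ?_⟩
    rintro y ⟨α, hα, rfl⟩
    have h1 : ∑ s, μ0 s * min (V s) α ≤ ∑ s, μ0 s * V s :=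
      Finset.sum_le_sum fun s _ =>
        mul_le_mul_of_nonneg_left (min_le_left _ _) (hμ0 s)
    have h2 : 0 ≤ ρ * (α - ⨅ s', min (V s') α) := by
      rw [hclip α hα.1]
      have := hα.1
      nlinarith
    simp only
    linarith
  apply le_antisymm
  · -- strong direction: construct optimal μ
    obtain ⟨α, hαI, μ, hμnn, hμ1, hμtv, hval⟩ : ∃ α ∈ Set.Icc m M, ∃ μ : S → ℝ,
        (∀ s, 0 ≤ μ s) ∧ (∑ s, μ s = 1) ∧ ((1 / 2) * ∑ s, |μ s - μ0 s| ≤ ρ) ∧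
        ∑ s, μ s * V s = (∑ s, μ0 s * min (V s) α) - ρ * (α - m) := by
      by_cases hcase : (∑ s, if m < V s then μ0 s else 0) ≤ ρ
      · -- large budget case: push everything to the minimum
        set tm := ∑ s, if m < V s then μ0 s else 0 with htm
        have htmnn : 0 ≤ tm := Finset.sum_nonneg fun s _ => by
          split <;> [exact hμ0 s; exact le_refl 0]
        set μ : S → ℝ := fun s =>
          μ0 s + (if s = s0 then tm else 0) - (if m < V s then μ0 s else 0) with hμdef
        have hnn : ∀ s, 0 ≤ μ s := by
          intro s
          simp only [hμdef]
          by_cases h1 : s = s0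
          · subst h1
            have h2 : ¬ m < V s := by rw [hV0]; exact lt_irrefl m
            simp only [if_pos rfl, eq_self_iff_true, if_true, if_neg h2]
            have := hμ0 s; linarith
          · simp only [if_neg h1]
            by_cases h2 : m < V s
            · simp only [if_pos h2]; linarith
            · simp only [if_neg h2]; have := hμ0 s; linarith
        have h1 : ∑ s, μ s = 1 := by
          simp only [hμdef]
          rw [Finset.sum_sub_distrib, Finset.sum_add_distrib]
          simp only [Finset.sum_ite_eq', Finset.mem_univ, if_true]
          rw [hsum, ← htm]; ring
        have htv : (1 / 2) * ∑ s, |μ s - μ0 s| ≤ ρ := by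
          have hterm : ∀ s, |μ s - μ0 s|
              = (if s = s0 then tm else 0) + (if m < V s then μ0 s else 0) := by
            intro s
            simp only [hμdef]
            by_cases h1 : s = s0
            · subst h1
              have h2 : ¬ m < V s := by rw [hV0]; exact lt_irrefl m
              simp only [if_pos rfl, eq_self_iff_true, if_true, if_neg h2]
              rw [show μ0 s + tm - 0 - μ0 s = tm by ring, abs_of_nonneg htmnn]; ring
            · simp only [if_neg h1]
              by_cases h2 : m < V s
              · simp only [if_pos h2]
                rw [show μ0 s + 0 - μ0 s - μ0 s = -(μ0 s) by ring, abs_neg,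
                  abs_of_nonneg (hμ0 s)]; ring
              · simp only [if_neg h2]; simp
          rw [Finset.sum_congr rfl (fun s _ => hterm s), Finset.sum_add_distrib]
          simp only [Finset.sum_ite_eq', Finset.mem_univ, if_true]
          rw [← htm]
          linarith
        have hval : ∑ s, μ s * V s = (∑ s, μ0 s * min (V s) m) - ρ * (m - m) := by
          have hterm : ∀ s, μ s * V s = μ s * m := by
            intro s
            by_cases h1 : s = s0
            · subst h1; rw [hV0]
            · by_cases h2 : m < V s
              · have : μ s = 0 := by
                  simp only [hμdef, if_neg h1, if_pos h2]; ring
                rw [this]; ring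
              · have : V s = m := le_antisymm (not_lt.mp h2) (hmV s)
                rw [this]
          have e1 : ∑ s, μ s * V s = m := by
            rw [Finset.sum_congr rfl (fun s _ => hterm s), ← Finset.sum_mul, h1, one_mul]
          have e2 : ∑ s, μ0 s * min (V s) m = m := by
            have : ∀ s, μ0 s * min (V s) m = μ0 s * m := by
              intro s; rw [min_eq_right (hmV s)]
            rw [Finset.sum_congr rfl (fun s _ => this s), ← Finset.sum_mul, hsum, one_mul]
          rw [e1, e2]; ring
        exact ⟨m, ⟨le_refl m, hmM⟩, μ, hnn, h1, htv, hval⟩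
      · -- small budget case: find the crossing level α*
        push_neg at hcase
        set C : Finset S := Finset.univ.filter
          (fun s => (∑ s', if V s < V s' then μ0 s' else 0) ≤ ρ) with hC
        have hCne : C.Nonempty := by
          refine ⟨sM, Finset.mem_filter.mpr ⟨Finset.mem_univ _, ?_⟩⟩
          have : ∀ s', (if V sM < V s' then μ0 s' else 0) = 0 := by
            intro s'; rw [if_neg (not_lt.mpr (hsM s'))]
          rw [Finset.sum_congr rfl (fun s' _ => this s'), Finset.sum_const_zero]
          exact hρ
        obtain ⟨sstar, hsC, hsmin⟩ := C.exists_min_image V hCne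
        set α := V sstar with hα_def
        have ht : (∑ s', if α < V s' then μ0 s' else 0) ≤ ρ :=
          (Finset.mem_filter.mp hsC).2
        set t := ∑ s', if α < V s' then μ0 s' else 0 with htdef
        have htnn : 0 ≤ t := Finset.sum_nonneg fun s _ => by
          split <;> [exact hμ0 s; exact le_refl 0]
        have hmα : m < α := by
          rcases lt_or_eq_of_le (hmV sstar) with h | h
          · exact h
          · exfalso
            apply absurd ht
            push_neg
            calc ρ < ∑ s, if m < V s then μ0 s else 0 := hcase
              _ = ∑ s', if α < V s' then μ0 s' else 0 := by
                  rw [hα_def, ← h]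
        -- the largest value strictly below α
        have hs0D : s0 ∈ Finset.univ.filter (fun s => V s < α) :=
          Finset.mem_filter.mpr ⟨Finset.mem_univ _, by rw [hV0]; exact hmα⟩
        obtain ⟨s1, hs1D, hs1max⟩ :=
          (Finset.univ.filter (fun s => V s < α)).exists_max_image V ⟨s0, hs0D⟩
        have hs1lt : V s1 < α := (Finset.mem_filter.mp hs1D).2
        have hs1notC : s1 ∉ C := by
          intro hmem
          exact absurd (hsmin s1 hmem) (not_le.mpr hs1lt)
        have hs1sum : ρ < ∑ s', if V s1 < V s' then μ0 s' else 0 := by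
          by_contra h
          push_neg at h
          exact hs1notC (Finset.mem_filter.mpr ⟨Finset.mem_univ _, h⟩)
        set b := ∑ s', if V s' = α then μ0 s' else 0 with hbdef
        have hsplit : (∑ s', if V s1 < V s' then μ0 s' else 0) = t + b := by
          have hterm : ∀ s', (if V s1 < V s' then μ0 s' else 0)
              = (if α < V s' then μ0 s' else 0) + (if V s' = α then μ0 s' else 0) := by
            intro s'
            rcases lt_trichotomy (V s') α with h | h | h
            · have h1 : ¬ V s1 < V s' := by
                have : s' ∈ Finset.univ.filter (fun s => V s < α) :=
                  Finset.mem_filter.mpr ⟨Finset.mem_univ _, h⟩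
                exact not_lt.mpr (hs1max s' this)
              rw [if_neg h1, if_neg (not_lt.mpr h.le), if_neg (ne_of_lt h)]; ring
            · rw [if_pos (h ▸ hs1lt), if_neg (not_lt.mpr h.le), if_pos h]; ring
            · rw [if_pos (lt_trans hs1lt h), if_pos h, if_neg (ne_of_gt h)]; ring
          rw [Finset.sum_congr rfl (fun s' _ => hterm s'), Finset.sum_add_distrib]
        have htb : ρ < t + b := hsplit ▸ hs1sum
        have hb : 0 < b := by linarith
        set c := (ρ - t) / b with hcdef
        have hc0 : 0 ≤ c := div_nonneg (by linarith) hb.le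
        have hc1 : c ≤ 1 := by
          rw [div_le_one hb]; linarith
        have hcb : c * b = ρ - t := div_mul_cancel₀ _ (ne_of_gt hb)
        set μ : S → ℝ := fun s => μ0 s + (if s = s0 then ρ else 0)
          - (if α < V s then μ0 s else 0) - (if V s = α then c * μ0 s else 0) with hμdef
        have hVs0α : ¬ V s0 = α := by rw [hV0]; exact ne_of_lt hmα
        have hVs0lt : ¬ α < V s0 := by rw [hV0]; exact not_lt.mpr hmα.le
        have hnn : ∀ s, 0 ≤ μ s := by
          intro s
          simp only [hμdef]
          by_cases h1 : s = s0
          · subst h1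
            simp only [if_pos rfl, eq_self_iff_true, if_true, if_neg hVs0lt, if_neg hVs0α]
            have := hμ0 s; linarith
          · simp only [if_neg h1]
            by_cases h2 : α < V s
            · simp only [if_pos h2, if_neg (ne_of_gt h2)]; have := hμ0 s; linarith
            · simp only [if_neg h2]
              by_cases h3 : V s = α
              · simp only [if_pos h3]
                have := hμ0 s
                nlinarith
              · simp only [if_neg h3]; have := hμ0 s; linarith
        have hsum1 : ∑ s, μ s = 1 := by
          simp only [hμdef]
          rw [Finset.sum_sub_distrib, Finset.sum_sub_distrib, Finset.sum_add_distrib]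
          simp only [Finset.sum_ite_eq', Finset.mem_univ, if_true]
          have e : ∑ s, (if V s = α then c * μ0 s else 0)
              = c * b := by
            rw [hbdef, Finset.mul_sum]
            exact Finset.sum_congr rfl fun s _ => by split <;> ring
          rw [hsum, ← htdef, e, hcb]; ring
        have htv : (1 / 2) * ∑ s, |μ s - μ0 s| ≤ ρ := by
          have hterm : ∀ s, |μ s - μ0 s|
              = (if s = s0 then ρ else 0) + (if α < V s then μ0 s else 0)
                + (if V s = α then c * μ0 s else 0) := by
            intro s
            simp only [hμdef]
            by_cases h1 : s = s0
            · subst h1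
              simp only [if_pos rfl, eq_self_iff_true, if_true, if_neg hVs0lt, if_neg hVs0α]
              rw [show μ0 s + ρ - 0 - 0 - μ0 s = ρ by ring, abs_of_nonneg hρ]; ring
            · simp only [if_neg h1]
              by_cases h2 : α < V s
              · simp only [if_pos h2, if_neg (ne_of_gt h2)]
                rw [show μ0 s + 0 - μ0 s - 0 - μ0 s = -(μ0 s) by ring, abs_neg,
                  abs_of_nonneg (hμ0 s)]; ring
              · simp only [if_neg h2]
                by_cases h3 : V s = α
                · simp only [if_pos h3]
                  rw [show μ0 s + 0 - 0 - c * μ0 s - μ0 s = -(c * μ0 s) by ring, abs_neg,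
                    abs_of_nonneg (mul_nonneg hc0 (hμ0 s))]; ring
                · simp only [if_neg h3]; simp
          rw [Finset.sum_congr rfl (fun s _ => hterm s), Finset.sum_add_distrib,
            Finset.sum_add_distrib]
          simp only [Finset.sum_ite_eq', Finset.mem_univ, if_true]
          have e : ∑ s, (if V s = α then c * μ0 s else 0) = c * b := by
            rw [hbdef, Finset.mul_sum]
            exact Finset.sum_congr rfl fun s _ => by split <;> ring
          rw [← htdef, e, hcb]
          linarith
        have hval : ∑ s, μ s * V s = (∑ s, μ0 s * min (V s) α) - ρ * (α - m) := by
          set T1 := ∑ s, if α < V s then μ0 s * V s else 0 with hT1def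
          have E1 : ∑ s, μ s * V s
              = (∑ s, μ0 s * V s) + ρ * m - T1 - c * (α * b) := by
            have hterm : ∀ s, μ s * V s
                = μ0 s * V s + (if s = s0 then ρ * m else 0)
                  - (if α < V s then μ0 s * V s else 0)
                  - (if V s = α then c * (α * μ0 s) else 0) := by
              intro s
              simp only [hμdef]
              by_cases h1 : s = s0
              · subst h1
                simp only [if_pos rfl, eq_self_iff_true, if_true, if_neg hVs0lt, if_neg hVs0α]
                rw [hV0]; ring
              · simp only [if_neg h1]
                by_cases h2 : α < V s
                · simp only [if_pos h2, if_neg (ne_of_gt h2)]; ring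
                · simp only [if_neg h2]
                  by_cases h3 : V s = α
                  · simp only [if_pos h3]; rw [h3]; ring
                  · simp only [if_neg h3]; ring
            rw [Finset.sum_congr rfl (fun s _ => hterm s), Finset.sum_sub_distrib,
              Finset.sum_sub_distrib, Finset.sum_add_distrib]
            simp only [Finset.sum_ite_eq', Finset.mem_univ, if_true]
            have e : ∑ s, (if V s = α then c * (α * μ0 s) else 0) = c * (α * b) := by
              rw [hbdef, Finset.mul_sum, Finset.mul_sum]
              exact Finset.sum_congr rfl fun s _ => by split <;> ring
            rw [← hT1def, e]
          have E2 : ∑ s, μ0 s * min (V s) α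
              = (∑ s, μ0 s * V s) - T1 + α * t := by
            have hterm : ∀ s, μ0 s * min (V s) α
                = μ0 s * V s - (if α < V s then μ0 s * V s else 0)
                  + (if α < V s then α * μ0 s else 0) := by
              intro s
              by_cases h2 : α < V s
              · rw [min_eq_right h2.le, if_pos h2, if_pos h2]; ring
              · rw [min_eq_left (not_lt.mp h2), if_neg h2, if_neg h2]; ring
            rw [Finset.sum_congr rfl (fun s _ => hterm s), Finset.sum_add_distrib,
              Finset.sum_sub_distrib]
            have e : ∑ s, (if α < V s then α * μ0 s else 0) = α * t := by
              rw [htdef, Finset.mul_sum]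
              exact Finset.sum_congr rfl fun s _ => by split <;> ring
            rw [← hT1def, e]
          have hcab : c * (α * b) = (ρ - t) * α := by
            rw [show c * (α * b) = (c * b) * α by ring, hcb]
          rw [E1, E2, hcab]; ring
        exact ⟨α, ⟨hmV sstar, hVM sstar⟩, μ, hnn, hsum1, htv, hval⟩
    calc sInf ((fun μ : S → ℝ => ∑ s, μ s * V s) ''
          {μ | (∀ s, 0 ≤ μ s) ∧ (∑ s, μ s = 1) ∧ (1 / 2) * ∑ s, |μ s - μ0 s| ≤ ρ})
        ≤ ∑ s, μ s * V s := csInf_le LHSbdd ⟨μ, ⟨hμnn, hμ1, hμtv⟩, rfl⟩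
      _ ≤ sSup ((fun α : ℝ =>
            (∑ s, μ0 s * min (V s) α) - ρ * (α - ⨅ s', min (V s') α)) ''
            Set.Icc m M) := by
          rw [hval]
          apply le_csSup RHSbdd
          refine ⟨α, hαI, ?_⟩
          show (∑ s, μ0 s * min (V s) α) - ρ * (α - ⨅ s', min (V s') α)
              = (∑ s, μ0 s * min (V s) α) - ρ * (α - m)
          rw [hclip α hαI.1]
  · apply csSup_le RHSne
    rintro y ⟨α, hα, rfl⟩
    apply le_csInf LHSne
    rintro x ⟨μ, ⟨h1, h2, h3⟩, rfl⟩
    simp only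
    rw [hclip α hα.1]
    exact weak α hα μ h1 h2 h3
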